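/- Let I : ℝ → ℝ be a function and let y : ℝ → ℝ be differentiable with y(t) ∈ (−1, 1) for all t. Then y satisfies the quadratic phase equation y'(t) = (1 − I(t))·y(t)² + I(t) for all t if and only if the function x(t) = artanh(y(t)) is differentiable and satisfies x'(t) = sinh(x(t))² + I(t) for all t. -/

import Mathlib

/-- The real inverse hyperbolic tangent (not present in this version of
Mathlib), `artanh x = (1/2) * log ((1 + x) / (1 - x))`. -/
noncomputable def Real.artanh' (x : ℝ) : ℝ := (1 / 2) * Real.log ((1 + x) / (1 - x))

lemma hasDerivAt_artanh {a : ℝ} (h1 : -1 < a) (h2 : a < 1) :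
    HasDerivAt Real.artanh' (1 / (1 - a ^ 2)) a := by
  have h1a : (0:ℝ) < 1 + a := by linarith
  have h2a : (0:ℝ) < 1 - a := by linarith
  have A : HasDerivAt (fun x : ℝ => Real.log (1 + x)) (1 / (1 + a)) a := by
    have := (Real.hasDerivAt_log h1a.ne').comp a
      ((hasDerivAt_const a (1:ℝ)).add (hasDerivAt_id a))
    simpa [Function.comp_def] using this
  have B : HasDerivAt (fun x : ℝ => Real.log (1 - x)) (-(1 / (1 - a))) a := by
    have := (Real.hasDerivAt_log h2a.ne').comp a
      ((hasDerivAt_const a (1:ℝ)).sub (hasDerivAt_id a))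
    simpa [Function.comp_def] using this
  have C : HasDerivAt (fun x : ℝ => (1/2) * (Real.log (1 + x) - Real.log (1 - x)))
      ((1/2) * (1 / (1 + a) - -(1 / (1 - a)))) a :=
    (A.sub B).const_mul _
  have hC : (1/2) * (1 / (1 + a) - -(1 / (1 - a))) = 1 / (1 - a ^ 2) := by
    have h3 : (1:ℝ) - a ^ 2 = (1 + a) * (1 - a) := by ring
    rw [h3]
    field_simp
    ring
  rw [hC] at C
  refine C.congr_of_eventuallyEq ?_
  filter_upwards [isOpen_Ioo.mem_nhds (Set.mem_Ioo.mpr ⟨h1, h2⟩)] with x hx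
  have hx1 : (0:ℝ) < 1 + x := by linarith [hx.1]
  have hx2 : (0:ℝ) < 1 - x := by linarith [hx.2]
  unfold Real.artanh'
  rw [Real.log_div hx1.ne' hx2.ne']

lemma sinh_artanh_sq {a : ℝ} (h1 : -1 < a) (h2 : a < 1) :
    Real.sinh (Real.artanh' a) ^ 2 = a ^ 2 / (1 - a ^ 2) := by
  have h1a : (0:ℝ) < 1 + a := by linarith
  have h2a : (0:ℝ) < 1 - a := by linarith
  set E := Real.exp (Real.artanh' a) with hEdef
  have hE : E ≠ 0 := Real.exp_ne_zero _
  have hE2 : E ^ 2 = (1 + a) / (1 - a) := by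
    rw [hEdef, sq, ← Real.exp_add]
    have : Real.artanh' a + Real.artanh' a = Real.log ((1 + a) / (1 - a)) := by
      unfold Real.artanh'; ring
    rw [this, Real.exp_log (div_pos h1a h2a)]
  have hs : Real.sinh (Real.artanh' a) = (E - E⁻¹) / 2 := by
    rw [Real.sinh_eq, Real.exp_neg]
  have hE2' : (1 - a) * E ^ 2 = 1 + a := by
    field_simp at hE2; linarith
  rw [hs]
  have hy2 : (1:ℝ) - a ^ 2 ≠ 0 := by nlinarith
  field_simp
  nlinarith [hE2', sq_nonneg E, sq_nonneg (E - E⁻¹)]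

theorem quadratic_phase_dual_to_sinh_squared_IF
    (I : ℝ → ℝ) (y : ℝ → ℝ) (hy : Differentiable ℝ y)
    (hyJ : ∀ t, y t ∈ Set.Ioo (-1 : ℝ) 1) :
    (∀ t, deriv y t = (1 - I t) * y t ^ 2 + I t) ↔
      (Differentiable ℝ (fun t => Real.artanh' (y t)) ∧
        ∀ t, deriv (fun s => Real.artanh' (y s)) t
          = Real.sinh (Real.artanh' (y t)) ^ 2 + I t) := by
  have hchain : ∀ t, HasDerivAt (fun s => Real.artanh' (y s))
      ((1 / (1 - y t ^ 2)) * deriv y t) t := fun t =>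
    (hasDerivAt_artanh (hyJ t).1 (hyJ t).2).comp t (hy t).hasDerivAt
  have hne : ∀ t, (1:ℝ) - y t ^ 2 ≠ 0 := by
    intro t
    have h1 := (hyJ t).1; have h2 := (hyJ t).2
    nlinarith
  constructor
  · intro hode
    refine ⟨fun t => (hchain t).differentiableAt, fun t => ?_⟩
    rw [(hchain t).deriv, hode t, sinh_artanh_sq (hyJ t).1 (hyJ t).2]
    field_simp [hne t]
    ring
  · rintro ⟨-, hode⟩ t
    have h := hode t
    rw [(hchain t).deriv, sinh_artanh_sq (hyJ t).1 (hyJ t).2] at h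
    have hne' := hne t
    field_simp at h
    nlinarith [h]
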